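/- Let t be a real number with 0 < t < 1/2, and define f : ℝ → ℝ by f(x) = tx² + x − t, which restricts to a homeomorphism of the open interval (−1, 1). Then this restriction is topologically conjugate to the translation by 1 on ℝ: there exists a homeomorphism h from ℝ onto (−1, 1) such that f(h(x)) = h(x − 1) for all x ∈ ℝ. -/

import Mathlib

set_option linter.unusedSectionVars false

namespace NatsumeAux

noncomputable def fm (t x : ℝ) : ℝ := t * x ^ 2 + x - t
noncomputable def gm (t w : ℝ) : ℝ := (-1 + Real.sqrt (1 + 4 * t * (t + w))) / (2 * t)

variable {t : ℝ} (ht0 : 0 < t) (ht1 : t < 1 / 2)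
include ht0 ht1

lemma arg_pos {w : ℝ} (hw : -1 ≤ w) : 0 < 1 + 4 * t * (t + w) := by nlinarith

lemma gm_fm {y : ℝ} (hy : -1 ≤ y) : gm t (fm t y) = y := by
  have h1 : 1 + 4 * t * (t + fm t y) = (2 * t * y + 1) ^ 2 := by unfold fm; ring
  have h2 : (0:ℝ) ≤ 2 * t * y + 1 := by nlinarith
  rw [gm, h1, Real.sqrt_sq h2]
  field_simp
  ring

lemma fm_gm {w : ℝ} (hw : -1 ≤ w) : fm t (gm t w) = w := by
  have h0 : (0:ℝ) ≤ 1 + 4 * t * (t + w) := (arg_pos ht0 ht1 hw).le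
  have hs : Real.sqrt (1 + 4 * t * (t + w)) ^ 2 = 1 + 4 * t * (t + w) := Real.sq_sqrt h0
  have ht : (2 * t) ≠ 0 := by positivity
  rw [fm, gm]
  set s := Real.sqrt (1 + 4 * t * (t + w)) with hsdef
  field_simp
  linear_combination hs

lemma fm_lt {x y : ℝ} (hx : -1 ≤ x) (hxy : x < y) : fm t x < fm t y := by
  have h : 0 < t * (x + y) + 1 := by nlinarith
  have key := mul_pos (sub_pos.2 hxy) h
  unfold fm; nlinarith [key]

lemma gm_lt {x y : ℝ} (hx : -1 ≤ x) (hxy : x < y) : gm t x < gm t y := by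
  unfold gm
  have h1 : Real.sqrt (1 + 4 * t * (t + x)) < Real.sqrt (1 + 4 * t * (t + y)) :=
    Real.sqrt_lt_sqrt (arg_pos ht0 ht1 hx).le (by nlinarith)
  have h2 : (0:ℝ) < 2 * t := by linarith
  exact div_lt_div_of_pos_right (by linarith) h2

lemma gm_le {x y : ℝ} (hx : -1 ≤ x) (hxy : x ≤ y) : gm t x ≤ gm t y := by
  rcases eq_or_lt_of_le hxy with rfl | h
  · exact le_rfl
  · exact (gm_lt ht0 ht1 hx h).le

lemma fm_le {x y : ℝ} (hx : -1 ≤ x) (hxy : x ≤ y) : fm t x ≤ fm t y := by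
  rcases eq_or_lt_of_le hxy with rfl | h
  · exact le_rfl
  · exact (fm_lt ht0 ht1 hx h).le

lemma fm_neg_one : fm t (-1) = -1 := by unfold fm; ring

lemma fm_one : fm t 1 = 1 := by unfold fm; ring

lemma gm_neg_one : gm t (-1) = -1 := by
  have h1 : 1 + 4 * t * (t + -1) = (1 - 2*t) ^ 2 := by ring
  rw [gm, h1, Real.sqrt_sq (by linarith)]
  field_simp
  ring

lemma gm_one : gm t 1 = 1 := by
  have h1 : 1 + 4 * t * (t + 1) = (1 + 2*t) ^ 2 := by ring
  rw [gm, h1, Real.sqrt_sq (by linarith)]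
  field_simp
  ring

lemma fm_mem_Icc {y : ℝ} (hy : y ∈ Set.Icc (-1:ℝ) 1) : fm t y ∈ Set.Icc (-1:ℝ) 1 := by
  obtain ⟨h1, h2⟩ := hy
  constructor
  · calc (-1:ℝ) = fm t (-1) := (fm_neg_one ht0 ht1).symm
      _ ≤ fm t y := fm_le ht0 ht1 le_rfl h1
  · calc fm t y ≤ fm t 1 := fm_le ht0 ht1 h1 h2
      _ = 1 := fm_one ht0 ht1

lemma gm_mem_Icc {y : ℝ} (hy : y ∈ Set.Icc (-1:ℝ) 1) : gm t y ∈ Set.Icc (-1:ℝ) 1 := by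
  obtain ⟨h1, h2⟩ := hy
  constructor
  · calc (-1:ℝ) = gm t (-1) := (gm_neg_one ht0 ht1).symm
      _ ≤ gm t y := gm_le ht0 ht1 le_rfl h1
  · calc gm t y ≤ gm t 1 := gm_le ht0 ht1 h1 h2
      _ = 1 := gm_one ht0 ht1

lemma fm_mem_Ioo {y : ℝ} (hy : y ∈ Set.Ioo (-1:ℝ) 1) : fm t y ∈ Set.Ioo (-1:ℝ) 1 := by
  obtain ⟨h1, h2⟩ := hy
  constructor
  · calc (-1:ℝ) = fm t (-1) := (fm_neg_one ht0 ht1).symm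
      _ < fm t y := fm_lt ht0 ht1 le_rfl h1
  · calc fm t y < fm t 1 := fm_lt ht0 ht1 h1.le h2
      _ = 1 := fm_one ht0 ht1

lemma gm_mem_Ioo {y : ℝ} (hy : y ∈ Set.Ioo (-1:ℝ) 1) : gm t y ∈ Set.Ioo (-1:ℝ) 1 := by
  obtain ⟨h1, h2⟩ := hy
  constructor
  · calc (-1:ℝ) = gm t (-1) := (gm_neg_one ht0 ht1).symm
      _ < gm t y := gm_lt ht0 ht1 le_rfl h1
  · calc gm t y < gm t 1 := gm_lt ht0 ht1 h1.le h2
      _ = 1 := gm_one ht0 ht1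

lemma fm_lt_self {y : ℝ} (hy : y ∈ Set.Ioo (-1:ℝ) 1) : fm t y < y := by
  obtain ⟨h1, h2⟩ := hy
  have : t * (y^2 - 1) < 0 := mul_neg_of_pos_of_neg ht0 (by nlinarith)
  unfold fm; nlinarith

lemma lt_gm_self {y : ℝ} (hy : y ∈ Set.Ioo (-1:ℝ) 1) : y < gm t y := by
  have h1 := fm_lt_self ht0 ht1 hy
  have h2 := gm_lt ht0 ht1 (fm_mem_Ioo ht0 ht1 hy).1.le h1
  rwa [gm_fm ht0 ht1 hy.1.le] at h2

lemma fIter_mem_Icc (k : ℕ) {y : ℝ} (hy : y ∈ Set.Icc (-1:ℝ) 1) :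
    (fm t)^[k] y ∈ Set.Icc (-1:ℝ) 1 := by
  induction k with
  | zero => simpa using hy
  | succ k ih => rw [Function.iterate_succ_apply']; exact fm_mem_Icc ht0 ht1 ih

lemma gIter_mem_Icc (k : ℕ) {y : ℝ} (hy : y ∈ Set.Icc (-1:ℝ) 1) :
    (gm t)^[k] y ∈ Set.Icc (-1:ℝ) 1 := by
  induction k with
  | zero => simpa using hy
  | succ k ih => rw [Function.iterate_succ_apply']; exact gm_mem_Icc ht0 ht1 ih

lemma fIter_mem_Ioo (k : ℕ) {y : ℝ} (hy : y ∈ Set.Ioo (-1:ℝ) 1) :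
    (fm t)^[k] y ∈ Set.Ioo (-1:ℝ) 1 := by
  induction k with
  | zero => simpa using hy
  | succ k ih => rw [Function.iterate_succ_apply']; exact fm_mem_Ioo ht0 ht1 ih

lemma gIter_mem_Ioo (k : ℕ) {y : ℝ} (hy : y ∈ Set.Ioo (-1:ℝ) 1) :
    (gm t)^[k] y ∈ Set.Ioo (-1:ℝ) 1 := by
  induction k with
  | zero => simpa using hy
  | succ k ih => rw [Function.iterate_succ_apply']; exact gm_mem_Ioo ht0 ht1 ih

lemma fIter_lt (k : ℕ) {x y : ℝ} (hx : x ∈ Set.Icc (-1:ℝ) 1) (hxy : x < y) :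
    (fm t)^[k] x < (fm t)^[k] y := by
  induction k with
  | zero => simpa using hxy
  | succ k ih =>
      rw [Function.iterate_succ_apply', Function.iterate_succ_apply']
      exact fm_lt ht0 ht1 (fIter_mem_Icc ht0 ht1 k hx).1 ih

lemma gIter_lt (k : ℕ) {x y : ℝ} (hx : x ∈ Set.Icc (-1:ℝ) 1) (hxy : x < y) :
    (gm t)^[k] x < (gm t)^[k] y := by
  induction k with
  | zero => simpa using hxy
  | succ k ih =>
      rw [Function.iterate_succ_apply', Function.iterate_succ_apply']
      exact gm_lt ht0 ht1 (gIter_mem_Icc ht0 ht1 k hx).1 ih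

lemma fg_iter (k : ℕ) {y : ℝ} (hy : y ∈ Set.Icc (-1:ℝ) 1) :
    (fm t)^[k] ((gm t)^[k] y) = y := by
  induction k generalizing y with
  | zero => simp
  | succ k ih =>
      rw [Function.iterate_succ_apply (gm t), Function.iterate_succ_apply' (fm t),
        ih (gm_mem_Icc ht0 ht1 hy)]
      exact fm_gm ht0 ht1 hy.1

lemma gf_iter (k : ℕ) {y : ℝ} (hy : y ∈ Set.Icc (-1:ℝ) 1) :
    (gm t)^[k] ((fm t)^[k] y) = y := by
  induction k generalizing y with
  | zero => simp
  | succ k ih =>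
      rw [Function.iterate_succ_apply (fm t), Function.iterate_succ_apply' (gm t),
        ih (fm_mem_Icc ht0 ht1 hy)]
      exact gm_fm ht0 ht1 hy.1

end NatsumeAux

namespace NatsumeAux

noncomputable def iter (t : ℝ) (n : ℤ) (y : ℝ) : ℝ :=
  if 0 ≤ n then (gm t)^[n.toNat] y else (fm t)^[(-n).toNat] y

variable {t : ℝ} (ht0 : 0 < t) (ht1 : t < 1 / 2)
include ht0 ht1

lemma iter_eq_pos (n : ℤ) (hn : 0 ≤ n) (y : ℝ) : iter t n y = (gm t)^[n.toNat] y := by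
  rw [iter, if_pos hn]

lemma iter_eq_neg (n : ℤ) (hn : n ≤ 0) (y : ℝ) : iter t n y = (fm t)^[(-n).toNat] y := by
  rcases eq_or_lt_of_le hn with rfl | hn'
  · rw [iter, if_pos le_rfl]; simp
  · rw [iter, if_neg (by omega)]

lemma iter_succ (n : ℤ) {y : ℝ} (hy : y ∈ Set.Icc (-1:ℝ) 1) :
    iter t (n+1) y = gm t (iter t n y) := by
  rcases le_or_gt 0 n with hn | hn
  · rw [iter_eq_pos ht0 ht1 _ (by omega), iter_eq_pos ht0 ht1 _ hn]
    have h : (n+1).toNat = n.toNat + 1 := by omega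
    rw [h, Function.iterate_succ_apply']
  · rw [iter_eq_neg ht0 ht1 _ (by omega), iter_eq_neg ht0 ht1 _ (by omega)]
    have h : (-n).toNat = (-(n+1)).toNat + 1 := by omega
    rw [h, Function.iterate_succ_apply',
      gm_fm ht0 ht1 (fIter_mem_Icc ht0 ht1 _ hy).1]

lemma iter_pred (n : ℤ) {y : ℝ} (hy : y ∈ Set.Icc (-1:ℝ) 1) :
    iter t (n-1) y = fm t (iter t n y) := by
  rcases lt_or_ge 0 n with hn | hn
  · rw [iter_eq_pos ht0 ht1 _ (by omega), iter_eq_pos ht0 ht1 _ (by omega)]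
    have h : n.toNat = (n-1).toNat + 1 := by omega
    rw [h, Function.iterate_succ_apply',
      fm_gm ht0 ht1 (gIter_mem_Icc ht0 ht1 _ hy).1]
  · rw [iter_eq_neg ht0 ht1 _ (by omega), iter_eq_neg ht0 ht1 _ (by omega)]
    have h : (-(n-1)).toNat = (-n).toNat + 1 := by omega
    rw [h, Function.iterate_succ_apply']

lemma iter_mem_Icc (n : ℤ) {y : ℝ} (hy : y ∈ Set.Icc (-1:ℝ) 1) :
    iter t n y ∈ Set.Icc (-1:ℝ) 1 := by
  rw [iter]
  split
  · exact gIter_mem_Icc ht0 ht1 _ hy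
  · exact fIter_mem_Icc ht0 ht1 _ hy

lemma iter_mem_Ioo (n : ℤ) {y : ℝ} (hy : y ∈ Set.Ioo (-1:ℝ) 1) :
    iter t n y ∈ Set.Ioo (-1:ℝ) 1 := by
  rw [iter]
  split
  · exact gIter_mem_Ioo ht0 ht1 _ hy
  · exact fIter_mem_Ioo ht0 ht1 _ hy

lemma iter_lt (n : ℤ) {x y : ℝ} (hx : x ∈ Set.Icc (-1:ℝ) 1) (hxy : x < y) :
    iter t n x < iter t n y := by
  rcases le_or_gt 0 n with hn | hn
  · rw [iter_eq_pos ht0 ht1 _ hn, iter_eq_pos ht0 ht1 _ hn]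
    exact gIter_lt ht0 ht1 _ hx hxy
  · rw [iter_eq_neg ht0 ht1 _ hn.le, iter_eq_neg ht0 ht1 _ hn.le]
    exact fIter_lt ht0 ht1 _ hx hxy

lemma iter_le (n : ℤ) {x y : ℝ} (hx : x ∈ Set.Icc (-1:ℝ) 1) (hxy : x ≤ y) :
    iter t n x ≤ iter t n y := by
  rcases eq_or_lt_of_le hxy with rfl | h
  · exact le_rfl
  · exact (iter_lt ht0 ht1 n hx h).le

lemma iter_g (n : ℤ) {y : ℝ} (hy : y ∈ Set.Icc (-1:ℝ) 1) :
    iter t n (gm t y) = iter t (n+1) y := by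
  rcases le_or_gt 0 n with hn | hn
  · rw [iter_eq_pos ht0 ht1 _ hn, iter_eq_pos ht0 ht1 _ (by omega)]
    have h : (n+1).toNat = n.toNat + 1 := by omega
    rw [h, Function.iterate_succ_apply]
  · rw [iter_eq_neg ht0 ht1 _ hn.le, iter_eq_neg ht0 ht1 _ (by omega)]
    have h : (-n).toNat = (-(n+1)).toNat + 1 := by omega
    rw [h, Function.iterate_succ_apply, fm_gm ht0 ht1 hy.1]

lemma iter_neg_iter (n : ℤ) {y : ℝ} (hy : y ∈ Set.Icc (-1:ℝ) 1) :
    iter t (-n) (iter t n y) = y := by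
  rcases le_or_gt 0 n with hn | hn
  · rw [iter_eq_pos ht0 ht1 _ hn, iter_eq_neg ht0 ht1 _ (by omega)]
    have h : (- -n).toNat = n.toNat := by omega
    rw [h]
    exact fg_iter ht0 ht1 _ hy
  · rw [iter_eq_neg ht0 ht1 _ hn.le, iter_eq_pos ht0 ht1 _ (by omega)]
    exact gf_iter ht0 ht1 _ hy

lemma zero_mem : (0:ℝ) ∈ Set.Ioo (-1:ℝ) 1 := by norm_num

lemma continuous_fm : Continuous (fm t) := by unfold fm; fun_prop

lemma continuous_gm : Continuous (gm t) := by
  unfold gm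
  fun_prop

lemma exists_fIter_lt {y : ℝ} (hy : y ∈ Set.Ioo (-1:ℝ) 1) :
    ∃ k : ℕ, (fm t)^[k] 0 < y := by
  set c : ℕ → ℝ := fun k => (fm t)^[k] 0 with hc
  have hmem : ∀ k, c k ∈ Set.Ioo (-1:ℝ) 1 := fun k =>
    fIter_mem_Ioo ht0 ht1 k (zero_mem ht0 ht1)
  have hanti : Antitone c := by
    apply antitone_nat_of_succ_le
    intro k
    have h1 := fm_lt_self ht0 ht1 (hmem k)
    have h2 : c (k+1) = fm t (c k) := Function.iterate_succ_apply' (fm t) k 0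
    linarith [h2 ▸ h1]
  have hbdd : BddBelow (Set.range c) := by
    refine ⟨-1, ?_⟩
    rintro x ⟨k, rfl⟩
    exact (hmem k).1.le
  have hlim : Filter.Tendsto c Filter.atTop (nhds (⨅ k, c k)) :=
    tendsto_atTop_ciInf hanti hbdd
  set L := ⨅ k, c k with hL
  have hfix : fm t L = L := by
    have h1 : Filter.Tendsto (fun k => c (k+1)) Filter.atTop (nhds L) :=
      hlim.comp (Filter.tendsto_add_atTop_nat 1)
    have h2 : Filter.Tendsto (fun k => fm t (c k)) Filter.atTop (nhds (fm t L)) :=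
      ((continuous_fm ht0 ht1).tendsto L).comp hlim
    have h3 : (fun k => c (k+1)) = fun k => fm t (c k) := by
      funext k
      exact Function.iterate_succ_apply' (fm t) k 0
    rw [h3] at h1
    exact tendsto_nhds_unique h2 h1
  have hL0 : L ≤ 0 := by
    have := ciInf_le hbdd 0
    simpa [hc] using this
  have hLeq : L = -1 := by
    have h4 : t * (L^2 - 1) = 0 := by unfold fm at hfix; nlinarith [hfix]
    have h5 : (L + 1) * (L - 1) = 0 := by
      have := mul_eq_zero.1 h4
      rcases this with h | h
      · exact absurd h (ne_of_gt ht0)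
      · nlinarith
    rcases mul_eq_zero.1 h5 with h | h
    · linarith
    · linarith
  have : L < y := by rw [hLeq]; exact hy.1
  exact exists_lt_of_ciInf_lt this

lemma exists_lt_gIter {y : ℝ} (hy : y ∈ Set.Ioo (-1:ℝ) 1) :
    ∃ k : ℕ, y < (gm t)^[k] 0 := by
  set c : ℕ → ℝ := fun k => (gm t)^[k] 0 with hc
  have hmem : ∀ k, c k ∈ Set.Ioo (-1:ℝ) 1 := fun k =>
    gIter_mem_Ioo ht0 ht1 k (zero_mem ht0 ht1)
  have hmono : Monotone c := by
    apply monotone_nat_of_le_succ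
    intro k
    have h1 := lt_gm_self ht0 ht1 (hmem k)
    have h2 : c (k+1) = gm t (c k) := Function.iterate_succ_apply' (gm t) k 0
    linarith [h2 ▸ h1]
  have hbdd : BddAbove (Set.range c) := by
    refine ⟨1, ?_⟩
    rintro x ⟨k, rfl⟩
    exact (hmem k).2.le
  have hlim : Filter.Tendsto c Filter.atTop (nhds (⨆ k, c k)) :=
    tendsto_atTop_ciSup hmono hbdd
  set L := ⨆ k, c k with hL
  have hfix : gm t L = L := by
    have h1 : Filter.Tendsto (fun k => c (k+1)) Filter.atTop (nhds L) :=
      hlim.comp (Filter.tendsto_add_atTop_nat 1)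
    have h2 : Filter.Tendsto (fun k => gm t (c k)) Filter.atTop (nhds (gm t L)) :=
      ((continuous_gm ht0 ht1).tendsto L).comp hlim
    have h3 : (fun k => c (k+1)) = fun k => gm t (c k) := by
      funext k
      exact Function.iterate_succ_apply' (gm t) k 0
    rw [h3] at h1
    exact tendsto_nhds_unique h2 h1
  have hL0 : 0 ≤ L := by
    have := le_ciSup hbdd 0
    simpa [hc] using this
  have hLm : -1 ≤ L := by linarith
  have hffix : fm t L = L := by
    calc fm t L = fm t (gm t L) := by rw [hfix]
      _ = L := fm_gm ht0 ht1 hLm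
  have hLeq : L = 1 := by
    have h4 : t * (L^2 - 1) = 0 := by unfold fm at hffix; nlinarith [hffix]
    have h5 : (L + 1) * (L - 1) = 0 := by
      have := mul_eq_zero.1 h4
      rcases this with h | h
      · exact absurd h (ne_of_gt ht0)
      · nlinarith
    rcases mul_eq_zero.1 h5 with h | h
    · linarith
    · linarith
  have : y < L := by rw [hLeq]; exact hy.2
  exact exists_lt_of_lt_ciSup this

lemma iterZero_strictMono : StrictMono (fun n : ℤ => iter t n 0) := by
  apply strictMono_int_of_lt_succ
  intro n
  have hmem := iter_mem_Ioo ht0 ht1 n (zero_mem ht0 ht1)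
  have h1 := lt_gm_self ht0 ht1 hmem
  rw [iter_succ ht0 ht1 n (Set.Ioo_subset_Icc_self (zero_mem ht0 ht1))]
  exact h1

lemma exists_base {y : ℝ} (hy : y ∈ Set.Ioo (-1:ℝ) 1) :
    ∃ n : ℤ, iter t n 0 ≤ y ∧ y < iter t (n+1) 0 := by
  obtain ⟨k1, hk1⟩ := exists_fIter_lt ht0 ht1 hy
  obtain ⟨k2, hk2⟩ := exists_lt_gIter ht0 ht1 hy
  have hK2 : y < iter t (k2:ℤ) 0 := by
    rw [iter_eq_pos ht0 ht1 _ (by positivity)]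
    simpa using hk2
  have hK1 : iter t (-(k1:ℤ)) 0 ≤ y := by
    rw [iter_eq_neg ht0 ht1 _ (by omega)]
    have h : (- -(k1:ℤ)).toNat = k1 := by omega
    rw [h]
    exact hk1.le
  have Hbdd : ∃ b : ℤ, ∀ z : ℤ, iter t z 0 ≤ y → z ≤ b := by
    refine ⟨k2, fun z hz => ?_⟩
    by_contra h
    push_neg at h
    have := iterZero_strictMono ht0 ht1 (show (k2:ℤ) < z from h)
    simp only at this
    linarith
  obtain ⟨n, hn1, hn2⟩ := Int.exists_greatest_of_bdd Hbdd ⟨-(k1:ℤ), hK1⟩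
  refine ⟨n, hn1, ?_⟩
  by_contra h
  push_neg at h
  have := hn2 (n+1) h
  omega

noncomputable def hmap (t : ℝ) (x : ℝ) : ℝ := iter t ⌊x⌋ (gm t 0 * Int.fract x)

lemma b_mem_Ioo : gm t 0 ∈ Set.Ioo (-1:ℝ) 1 := gm_mem_Ioo ht0 ht1 (zero_mem ht0 ht1)

lemma b_pos : 0 < gm t 0 := lt_gm_self ht0 ht1 (zero_mem ht0 ht1)

lemma base_mem_Ioo (x : ℝ) : gm t 0 * Int.fract x ∈ Set.Ioo (-1:ℝ) 1 := by
  have h0 : 0 ≤ gm t 0 * Int.fract x :=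
    mul_nonneg (b_pos ht0 ht1).le (Int.fract_nonneg x)
  have h1 : gm t 0 * Int.fract x < 1 := by
    have hb := b_mem_Ioo ht0 ht1
    have hf := Int.fract_lt_one x
    have hf0 := Int.fract_nonneg x
    nlinarith [hb.2, b_pos ht0 ht1]
  exact ⟨by linarith, h1⟩

lemma hmap_mem_Ioo (x : ℝ) : hmap t x ∈ Set.Ioo (-1:ℝ) 1 :=
  iter_mem_Ioo ht0 ht1 _ (base_mem_Ioo ht0 ht1 x)

lemma hmap_funEq (x : ℝ) : fm t (hmap t x) = hmap t (x - 1) := by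
  have hfl : ⌊x - 1⌋ = ⌊x⌋ - 1 := by
    exact_mod_cast Int.floor_sub_intCast x 1
  have hfr : Int.fract (x - 1) = Int.fract x := by
    exact_mod_cast Int.fract_sub_intCast x 1
  rw [hmap, hmap, hfl, hfr,
    iter_pred ht0 ht1 _ (Set.Ioo_subset_Icc_self (base_mem_Ioo ht0 ht1 x))]

lemma hmap_lt (x : ℝ) : hmap t x < iter t (⌊x⌋ + 1) 0 := by
  rw [← iter_g ht0 ht1 _ (Set.Ioo_subset_Icc_self (zero_mem ht0 ht1))]
  apply iter_lt ht0 ht1 _ (Set.Ioo_subset_Icc_self (base_mem_Ioo ht0 ht1 x))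
  have hf := Int.fract_lt_one x
  have hb := b_pos ht0 ht1
  nlinarith

lemma le_hmap (x : ℝ) : iter t ⌊x⌋ 0 ≤ hmap t x :=
  iter_le ht0 ht1 _ (Set.Ioo_subset_Icc_self (zero_mem ht0 ht1))
    (mul_nonneg (b_pos ht0 ht1).le (Int.fract_nonneg x))

lemma hmap_strictMono : StrictMono (hmap t) := by
  intro x y hxy
  have hff : ⌊x⌋ ≤ ⌊y⌋ := Int.floor_le_floor hxy.le
  rcases eq_or_lt_of_le hff with heq | hlt
  · have hfr : Int.fract x < Int.fract y := by
      rw [Int.fract, Int.fract, heq]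
      linarith
    rw [hmap, hmap, ← heq]
    exact iter_lt ht0 ht1 _ (Set.Ioo_subset_Icc_self (base_mem_Ioo ht0 ht1 x))
      (by nlinarith [b_pos ht0 ht1])
  · calc hmap t x < iter t (⌊x⌋ + 1) 0 := hmap_lt ht0 ht1 x
      _ ≤ iter t ⌊y⌋ 0 := (iterZero_strictMono ht0 ht1).monotone (by omega)
      _ ≤ hmap t y := le_hmap ht0 ht1 y

lemma hmap_surj {y : ℝ} (hy : y ∈ Set.Ioo (-1:ℝ) 1) : ∃ x : ℝ, hmap t x = y := by
  obtain ⟨n, h1, h2⟩ := exists_base ht0 ht1 hy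
  have h0Icc : (0:ℝ) ∈ Set.Icc (-1:ℝ) 1 := Set.Ioo_subset_Icc_self (zero_mem ht0 ht1)
  have hyIcc : y ∈ Set.Icc (-1:ℝ) 1 := Set.Ioo_subset_Icc_self hy
  have hbIcc : gm t 0 ∈ Set.Icc (-1:ℝ) 1 := Set.Ioo_subset_Icc_self (b_mem_Ioo ht0 ht1)
  set b := gm t 0 with hbdef
  set u := iter t (-n) y with hudef
  have hu0 : 0 ≤ u := by
    have h := iter_le ht0 ht1 (-n) (iter_mem_Icc ht0 ht1 n h0Icc) h1
    rwa [iter_neg_iter ht0 ht1 n h0Icc] at h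
  have hub : u < b := by
    have e : iter t (n+1) 0 = iter t n b := (iter_g ht0 ht1 n h0Icc).symm
    have h := iter_lt ht0 ht1 (-n) hyIcc h2
    rw [e, iter_neg_iter ht0 ht1 n hbIcc] at h
    exact h
  have hbpos := b_pos ht0 ht1
  have hq : u / b ∈ Set.Ico (0:ℝ) 1 :=
    ⟨div_nonneg hu0 hbpos.le, (div_lt_one hbpos).2 hub⟩
  refine ⟨(n:ℝ) + u / b, ?_⟩
  have hfl : ⌊(n:ℝ) + u / b⌋ = n := by
    rw [add_comm, Int.floor_add_intCast, Int.floor_eq_zero_iff.2 hq]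
    ring
  have hfr : Int.fract ((n:ℝ) + u / b) = u / b := by
    rw [add_comm, Int.fract_add_intCast, Int.fract_eq_self.2 ⟨hq.1, hq.2⟩]
  rw [hmap, hfl, hfr]
  have hcancel : b * (u / b) = u := by field_simp [show b ≠ 0 from hbpos.ne']
  rw [hcancel, hudef]
  have := iter_neg_iter ht0 ht1 (-n) hyIcc
  rwa [neg_neg] at this

end NatsumeAux

open NatsumeAux in
/-- For `0 < t < 1/2`, the homeomorphism `x ↦ tx² + x − t` of `(−1, 1)` is
topologically conjugate to the translation by 1 on `ℝ`: there is a
homeomorphism `h : ℝ ≃ₜ (−1, 1)` with `f(h(x)) = h(x − 1)` for all `x`. -/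
theorem natsume_map_conjugate_to_translation (t : ℝ) (ht0 : 0 < t) (ht1 : t < 1 / 2) :
    ∃ h : ℝ ≃ₜ (Set.Ioo (-1 : ℝ) 1),
      ∀ x : ℝ, t * ((h x : ℝ)) ^ 2 + (h x : ℝ) - t = (h (x - 1) : ℝ) := by
  set H : ℝ → (Set.Ioo (-1:ℝ) 1) := fun x => ⟨hmap t x, hmap_mem_Ioo ht0 ht1 x⟩ with hH
  have Hmono : StrictMono H := fun a b hab =>
    Subtype.mk_lt_mk.2 (hmap_strictMono ht0 ht1 hab)
  have Hsurj : Function.Surjective H := by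
    rintro ⟨y, hy⟩
    obtain ⟨x, hx⟩ := hmap_surj ht0 ht1 hy
    exact ⟨x, Subtype.ext hx⟩
  let e : ℝ ≃o (Set.Ioo (-1:ℝ) 1) := StrictMono.orderIsoOfSurjective H Hmono Hsurj
  refine ⟨e.toHomeomorph, fun x => ?_⟩
  have hcoe : ∀ z : ℝ, ((e.toHomeomorph z : ℝ)) = hmap t z := fun z => rfl
  rw [hcoe, hcoe]
  have := hmap_funEq ht0 ht1 x
  unfold fm at this
  exact this
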